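/- Let H be a complex Hilbert space and let T = a·I + K, where a ∈ ℂ with a ≠ 0, K : H → H is a compact linear operator, and T is invertible (has a bounded inverse). Let (V_j)_{j ∈ ℕ} be a sequence of finite-dimensional subspaces of H with orthogonal projections P_j : H → H onto V_j such that P_j x → x in H for every x ∈ H as j → ∞. Then for all sufficiently large j, the Galerkin truncation T̃_j := (P_j ∘ T)|_{V_j} : V_j → V_j is invertible, and ‖T̃_j⁻¹‖ → ‖T⁻¹‖ as j → ∞, where operator norms are taken with respect to the H-norm. -/

import Mathlib

open Filter

/-- The orthogonal projection onto a finite-dimensional subspace `V`, viewed as a bounded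
operator `H → H`. -/
noncomputable def projCLM {H : Type*} [NormedAddCommGroup H] [InnerProductSpace ℂ H]
    (V : Submodule ℂ H) [FiniteDimensional ℂ V] : H →L[ℂ] H :=
  V.subtypeL.comp (V.orthogonalProjection)

/-- The Galerkin truncation `T̃ := (P ∘ T)|_V : V → V` of an operator `T : H → H` to a
finite-dimensional subspace `V`, where `P` is the orthogonal projection onto `V`. -/
noncomputable def galerkinTruncSub {H : Type*} [NormedAddCommGroup H] [InnerProductSpace ℂ H]
    (T : H →L[ℂ] H) (V : Submodule ℂ H) [FiniteDimensional ℂ V] : V →L[ℂ] V :=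
  (V.orthogonalProjection).comp (T.comp V.subtypeL)

/-- If `P j → id` strongly with `‖P j x‖ ≤ ‖x‖` and `K` is compact, then `P j ∘ K → K`
in operator norm. -/
lemma tendsto_comp_compact_of_strong {H : Type*} [NormedAddCommGroup H] [InnerProductSpace ℂ H]
    (K : H →L[ℂ] H) (hK : IsCompactOperator ⇑K) (P : ℕ → (H →L[ℂ] H))
    (hPle : ∀ j x, ‖P j x‖ ≤ ‖x‖)
    (hP : ∀ x, Tendsto (fun j => P j x) atTop (nhds x)) :
    Tendsto (fun j => (P j).comp K) atTop (nhds K) := by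
  rw [Metric.tendsto_nhds]
  intro ε hε
  have hε8 : 0 < ε / 8 := by linarith
  have hK' : IsCompactOperator ⇑(K.toLinearMap) := hK
  obtain ⟨C, hCcomp, hCsub⟩ :=
    hK'.image_closedBall_subset_compact (𝕜₁ := ℂ) 1
  obtain ⟨t, htC, htcover⟩ := hCcomp.elim_nhds_subcover (fun y => Metric.ball y (ε / 8))
    (fun y _ => Metric.ball_mem_nhds y hε8)
  have hev : ∀ᶠ j in atTop, ∀ y ∈ t, ‖P j y - y‖ < ε / 8 := by
    rw [Filter.eventually_all_finset]
    intro y _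
    filter_upwards [(hP y) (Metric.ball_mem_nhds y hε8)] with j hj
    simp only [Set.mem_preimage, Metric.mem_ball, dist_eq_norm] at hj
    exact hj
  filter_upwards [hev] with j hj
  rw [dist_eq_norm]
  set f := (P j).comp K - K with hf
  have hb : ∀ x : H, ‖x‖ ≤ 1 → ‖f x‖ ≤ ε / 2 := by
    intro x hx
    have hKx : K x ∈ C := hCsub ⟨x, by simpa [Metric.mem_closedBall] using hx, rfl⟩
    obtain ⟨y, hyt, hmem⟩ := Set.mem_iUnion₂.mp (htcover hKx)
    have h1 : ‖K x - y‖ < ε / 8 := by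
      rw [← dist_eq_norm]; exact Metric.mem_ball.mp hmem
    have h2 : ‖P j y - y‖ < ε / 8 := hj y hyt
    have h3 : ‖P j (K x - y)‖ ≤ ‖K x - y‖ := hPle j _
    have hfx : f x = P j (K x - y) + (P j y - y) + (y - K x) := by
      simp only [hf, ContinuousLinearMap.sub_apply, ContinuousLinearMap.comp_apply, map_sub]
      abel
    calc ‖f x‖ = ‖P j (K x - y) + (P j y - y) + (y - K x)‖ := by rw [hfx]
      _ ≤ ‖P j (K x - y)‖ + ‖P j y - y‖ + ‖y - K x‖ := norm_add₃_le
      _ ≤ ‖K x - y‖ + ‖P j y - y‖ + ‖K x - y‖ := by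
          rw [norm_sub_rev y (K x)]; gcongr
      _ ≤ ε / 2 := by linarith
  have hopb : ‖f‖ ≤ ε / 2 := by
    apply ContinuousLinearMap.opNorm_le_bound _ (by linarith : (0:ℝ) ≤ ε / 2)
    intro x
    rcases eq_or_ne x 0 with rfl | hx0
    · simp
    · have hnx : (0:ℝ) < ‖x‖ := norm_pos_iff.mpr hx0
      set c : ℂ := (‖x‖ : ℂ)⁻¹ with hc
      have hcn : ‖c‖ = ‖x‖⁻¹ := by
        simp [hc]
      have hu : ‖c • x‖ = 1 := by
        rw [norm_smul, hcn, inv_mul_cancel₀ hnx.ne']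
      have hbu := hb (c • x) (le_of_eq hu)
      rw [map_smul, norm_smul, hcn] at hbu
      calc ‖f x‖ = ‖x‖ * (‖x‖⁻¹ * ‖f x‖) := by field_simp
        _ ≤ ‖x‖ * (ε / 2) := by gcongr
        _ = ε / 2 * ‖x‖ := mul_comm _ _
  linarith [hopb]

theorem galerkin_truncation_inverse_norm_tendsto
    {H : Type*} [NormedAddCommGroup H] [InnerProductSpace ℂ H] [CompleteSpace H]
    (a : ℂ) (ha : a ≠ 0)
    (K : H →L[ℂ] H) (hK : IsCompactOperator ⇑K)
    (T : H →L[ℂ] H) (hT : T = a • (1 : H →L[ℂ] H) + K)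
    -- `T` is invertible with bounded inverse `Tinv`
    (Tinv : H →L[ℂ] H) (hTinv₁ : T * Tinv = 1) (hTinv₂ : Tinv * T = 1)
    (V : ℕ → Submodule ℂ H) [∀ j, FiniteDimensional ℂ (V j)]
    -- `P_j x → x` for every `x ∈ H`
    (hproj : ∀ x : H, Tendsto (fun j => projCLM (V j) x) atTop (nhds x)) :
    ∃ (J : ℕ) (S : ∀ j : ℕ, (V j →L[ℂ] V j)),
      (∀ j : ℕ, J ≤ j →
        galerkinTruncSub T (V j) * S j = 1 ∧ S j * galerkinTruncSub T (V j) = 1) ∧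
      Tendsto (fun j => ‖S j‖) atTop (nhds ‖Tinv‖) := by
  classical
  set P : ℕ → H →L[ℂ] H := fun j => projCLM (V j) with hPdef
  -- basic facts about the projections
  have hPcoe : ∀ (j : ℕ) (v : V j), P j (v : H) = (v : H) := by
    intro j v
    simp [hPdef, projCLM, Submodule.orthogonalProjection_mem_subspace_eq_self]
  have hPmem : ∀ (j : ℕ) (x : H), P j x ∈ V j := by
    intro j x
    simp only [hPdef, projCLM, ContinuousLinearMap.comp_apply, Submodule.subtypeL_apply]
    exact Submodule.coe_mem _
  have hPle : ∀ (j : ℕ) (x : H), ‖P j x‖ ≤ ‖x‖ := by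
    intro j x
    have h1 : ‖P j x‖ = ‖(V j).orthogonalProjection x‖ := by
      simp [hPdef, projCLM]
    rw [h1]
    calc ‖(V j).orthogonalProjection x‖ ≤ ‖(V j).orthogonalProjection‖ * ‖x‖ :=
          ((V j).orthogonalProjection).le_opNorm x
      _ ≤ 1 * ‖x‖ := by gcongr; exact Submodule.orthogonalProjection_norm_le (V j)
      _ = ‖x‖ := one_mul _
  -- the approximating operators on H
  set Tj : ℕ → H →L[ℂ] H := fun j => a • (1 : H →L[ℂ] H) + (P j).comp K with hTjdef
  have hTjT : Tendsto Tj atTop (nhds T) := by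
    have h := tendsto_comp_compact_of_strong K hK P hPle hproj
    have : Tj = fun j => (a • (1 : H →L[ℂ] H)) + (P j).comp K := rfl
    rw [this, hT]
    exact tendsto_const_nhds.add h
  -- `T` is a unit
  set u : (H →L[ℂ] H)ˣ := ⟨T, Tinv, hTinv₁, hTinv₂⟩ with hu
  have hTunit : IsUnit T := ⟨u, rfl⟩
  have hinvT : Ring.inverse T = Tinv := by
    rw [show T = (u : H →L[ℂ] H) from rfl, Ring.inverse_unit]
    rfl
  have hev : ∀ᶠ j in atTop, IsUnit (Tj j) :=
    hTjT (Units.isOpen.mem_nhds hTunit)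
  have hinv : Tendsto (fun j => Ring.inverse (Tj j)) atTop (nhds Tinv) := by
    rw [← hinvT]
    exact (NormedRing.inverse_continuousAt u).tendsto.comp hTjT
  -- the candidate inverses
  set S : ∀ j : ℕ, (V j →L[ℂ] V j) :=
    fun j => galerkinTruncSub (Ring.inverse (Tj j)) (V j) with hSdef
  -- coercion computation for galerkinTruncSub
  have hgcoe : ∀ (A : H →L[ℂ] H) (j : ℕ) (v : V j),
      ((galerkinTruncSub A (V j) v : V j) : H) = P j (A (v : H)) := by
    intro A j v
    simp [galerkinTruncSub, hPdef, projCLM]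
  -- key facts for unit indices
  have hmain : ∀ j : ℕ, IsUnit (Tj j) →
      (∀ v : V j, (Ring.inverse (Tj j)) ((v : H)) ∈ V j) := by
    intro j hu' v
    set R := Ring.inverse (Tj j) with hR
    have hR1 : Tj j * R = 1 := Ring.mul_inverse_cancel _ hu'
    have hTR : Tj j (R (v : H)) = (v : H) := by
      have := congrArg (fun f : H →L[ℂ] H => f (v : H)) hR1
      simpa [ContinuousLinearMap.mul_apply] using this
    -- (1 - P j) (Tj j x) = a • (x - P j x)
    have hkey : ∀ x : H, Tj j x - P j (Tj j x) = a • (x - P j x) := by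
      intro x
      have hPP : P j (P j (K x)) = P j (K x) := by
        have := hPcoe j ((V j).orthogonalProjection x)
        simp only [hPdef, projCLM, ContinuousLinearMap.comp_apply, Submodule.subtypeL_apply]
        exact hPcoe j _
      simp only [hTjdef, ContinuousLinearMap.add_apply, ContinuousLinearMap.smul_apply,
        ContinuousLinearMap.one_apply, ContinuousLinearMap.comp_apply, map_add, map_smul, hPP,
        smul_sub]
      abel
    have h0 : (v : H) - P j (v : H) = a • (R (v : H) - P j (R (v : H))) := by
      have := hkey (R (v : H))
      rwa [hTR] at this
    rw [hPcoe j v, sub_self] at h0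
    have h1 : R (v : H) - P j (R (v : H)) = 0 := by
      have h := h0.symm
      rcases smul_eq_zero.mp h with h' | h'
      · exact absurd h' ha
      · exact h'
    have h2 : R (v : H) = P j (R (v : H)) := by
      linear_combination (norm := abel) h1
    rw [h2]
    exact hPmem j _
  -- inverse identities
  have hinv_id : ∀ j : ℕ, IsUnit (Tj j) →
      galerkinTruncSub T (V j) * S j = 1 ∧ S j * galerkinTruncSub T (V j) = 1 := by
    intro j hu'
    set R := Ring.inverse (Tj j) with hR
    have hR1 : Tj j * R = 1 := Ring.mul_inverse_cancel _ hu'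
    have hR2 : R * Tj j = 1 := Ring.inverse_mul_cancel _ hu'
    have hTR : ∀ y : H, Tj j (R y) = y := by
      intro y
      have := congrArg (fun f : H →L[ℂ] H => f y) hR1
      simpa [ContinuousLinearMap.mul_apply] using this
    have hRT : ∀ y : H, R (Tj j y) = y := by
      intro y
      have := congrArg (fun f : H →L[ℂ] H => f y) hR2
      simpa [ContinuousLinearMap.mul_apply] using this
    -- for w ∈ V j : P j (T w) = Tj j w
    have hPT : ∀ w : V j, P j (T (w : H)) = Tj j (w : H) := by
      intro w
      have hPP : P j (P j (K (w : H))) = P j (K (w : H)) := hPcoe j ⟨P j (K (w : H)), hPmem j _⟩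
      simp only [hT, hTjdef, ContinuousLinearMap.add_apply, ContinuousLinearMap.smul_apply,
        ContinuousLinearMap.one_apply, ContinuousLinearMap.comp_apply, map_add, map_smul,
        hPcoe j w]
    have hScoe : ∀ v : V j, ((S j v : V j) : H) = R (v : H) := by
      intro v
      rw [hSdef]
      rw [hgcoe]
      exact (hPcoe j ⟨R (v : H), hmain j hu' v⟩).symm ▸
        (hPcoe j ⟨R (v : H), hmain j hu' v⟩)
    constructor
    · ext v
      have : ((galerkinTruncSub T (V j) (S j v) : V j) : H) = (v : H) := by
        rw [hgcoe, hScoe, hPT ⟨R (v : H), hmain j hu' v⟩]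
        exact hTR (v : H)
      exact_mod_cast this
    · ext v
      have : ((S j (galerkinTruncSub T (V j) v) : V j) : H) = (v : H) := by
        rw [hScoe, hgcoe, hPT v]
        exact hRT (v : H)
      exact_mod_cast this
  obtain ⟨J, hJ⟩ := eventually_atTop.mp hev
  refine ⟨J, S, fun j hj => hinv_id j (hJ j hj), ?_⟩
  -- norm convergence
  have hSle : ∀ j : ℕ, IsUnit (Tj j) → ‖S j‖ ≤ ‖Ring.inverse (Tj j)‖ := by
    intro j hu'
    apply ContinuousLinearMap.opNorm_le_bound _ (norm_nonneg _)
    intro v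
    have hScoe : ((S j v : V j) : H) = P j (Ring.inverse (Tj j) (v : H)) := hgcoe _ j v
    rw [Submodule.coe_norm, hScoe, Submodule.coe_norm]
    calc ‖P j (Ring.inverse (Tj j) (v : H))‖ ≤ ‖Ring.inverse (Tj j) (v : H)‖ := hPle j _
      _ ≤ ‖Ring.inverse (Tj j)‖ * ‖(v : H)‖ := ContinuousLinearMap.le_opNorm _ _
  have hSge : ∀ j : ℕ, IsUnit (Tj j) → ∀ x : H,
      ‖Ring.inverse (Tj j) (P j x)‖ ≤ ‖S j‖ * ‖x‖ := by
    intro j hu' x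
    set v : V j := (V j).orthogonalProjection x with hv
    have hvcoe : (v : H) = P j x := by simp [hv, hPdef, projCLM]
    have hScoe : ((S j v : V j) : H) = Ring.inverse (Tj j) (v : H) := by
      rw [hgcoe]
      exact hPcoe j ⟨Ring.inverse (Tj j) (v : H), hmain j hu' v⟩
    calc ‖Ring.inverse (Tj j) (P j x)‖ = ‖S j v‖ := by
          rw [Submodule.coe_norm, hScoe, hvcoe]
      _ ≤ ‖S j‖ * ‖v‖ := ContinuousLinearMap.le_opNorm _ _
      _ ≤ ‖S j‖ * ‖x‖ := by
          have : ‖v‖ ≤ ‖x‖ := by rw [Submodule.coe_norm, hvcoe]; exact hPle j x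
          exact mul_le_mul_of_nonneg_left this (ContinuousLinearMap.opNorm_nonneg _)
  rw [Metric.tendsto_nhds]
  intro ε hε
  -- upper bound eventually
  have hnormtend : Tendsto (fun j => ‖Ring.inverse (Tj j)‖) atTop (nhds ‖Tinv‖) :=
    hinv.norm
  have hub : ∀ᶠ j in atTop, ‖Ring.inverse (Tj j)‖ < ‖Tinv‖ + ε :=
    hnormtend (Iio_mem_nhds (by linarith))
  -- lower bound eventually
  have hlb : ∀ᶠ j in atTop, ‖Tinv‖ - ε < ‖S j‖ := by
    obtain ⟨x, hx1, hx2⟩ := Tinv.exists_lt_apply_of_lt_opNorm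
      (show ‖Tinv‖ - ε / 2 < ‖Tinv‖ by linarith)
    have happ : Tendsto (fun j => Ring.inverse (Tj j) (P j x)) atTop (nhds (Tinv x)) := by
      have hcont := isBoundedBilinearMap_apply (𝕜 := ℂ) (E := H) (F := H) |>.continuous
      have := (hcont.tendsto (Tinv, x)).comp (hinv.prodMk_nhds (hproj x))
      exact this
    have hevlb : ∀ᶠ j in atTop, ‖Tinv‖ - ε / 2 < ‖Ring.inverse (Tj j) (P j x)‖ :=
      happ.norm (Ioi_mem_nhds hx2)
    filter_upwards [hev, hevlb] with j hu' hlbj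
    have h1 := hSge j hu' x
    have h2 : ‖S j‖ * ‖x‖ ≤ ‖S j‖ := by
      calc ‖S j‖ * ‖x‖ ≤ ‖S j‖ * 1 := by
            exact mul_le_mul_of_nonneg_left hx1.le (ContinuousLinearMap.opNorm_nonneg _)
        _ = ‖S j‖ := mul_one _
    linarith
  filter_upwards [hev, hub, hlb] with j hu' hubj hlbj
  rw [Real.dist_eq, abs_sub_lt_iff]
  have := hSle j hu'
  constructor <;> linarith
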